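/- Let M > 0 and for a > 0 let r₁(a) = (2a/√3)·sinh((1/3)·arsinh(3√3·M/a)) be the unique positive root of r ↦ 1 − 2M/r + r²/a², and set ε(a) = 1 − r₁(a)/(2M). Then: (1) lim_{a → +∞} r₁(a) = 2M; (2) lim_{a → 0⁺} r₁(a)/(2M·a²)^(1/3) = 1; (3) for all a > 0, ε(a) = r₁(a)²/(a² + r₁(a)²) and ε(a) ∈ (0, 1); (4) lim_{a → +∞} ε(a) = 0 and lim_{a → 0⁺} ε(a) = 1. -/

import Mathlib

/-- Bounds and asymptotic behaviour of the allowed-boundary radius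
`r₁(a)` of the open (K = -1) McVittie spacetime and of the auxiliary parameter
`ε(a) = 1 - r₁(a)/(2M)`. -/
theorem mcvittie_open_boundary_asymptotics (M : ℝ) (hM : 0 < M)
    (r₁ ε : ℝ → ℝ)
    (hr₁ : ∀ a : ℝ, 0 < a → r₁ a = (2 * a / Real.sqrt 3) *
      Real.sinh ((1 / 3) * Real.arsinh (3 * Real.sqrt 3 * M / a)))
    (hε : ∀ a : ℝ, 0 < a → ε a = 1 - r₁ a / (2 * M)) :
    Filter.Tendsto r₁ Filter.atTop (nhds (2 * M)) ∧
    Filter.Tendsto (fun a : ℝ => r₁ a / (2 * M * a ^ 2) ^ ((1 : ℝ) / 3))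
      (nhdsWithin 0 (Set.Ioi 0)) (nhds 1) ∧
    (∀ a : ℝ, 0 < a →
      ε a = (r₁ a) ^ 2 / (a ^ 2 + (r₁ a) ^ 2) ∧ ε a ∈ Set.Ioo (0 : ℝ) 1) ∧
    Filter.Tendsto ε Filter.atTop (nhds 0) ∧
    Filter.Tendsto ε (nhdsWithin 0 (Set.Ioi 0)) (nhds 1) := by
  have key : ∀ a : ℝ, 0 < a → 0 < r₁ a ∧ r₁ a + (r₁ a) ^ 3 / a ^ 2 = 2 * M := by
    intro a ha
    have h3 : (0:ℝ) < Real.sqrt 3 := Real.sqrt_pos.mpr (by norm_num)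
    have hx : 0 < 3 * Real.sqrt 3 * M / a := by positivity
    set s := Real.sinh ((1 / 3) * Real.arsinh (3 * Real.sqrt 3 * M / a)) with hsdef
    have hspos : 0 < s := by
      apply Real.sinh_pos_iff.mpr
      have := Real.arsinh_pos_iff.mpr hx
      linarith
    have hxval : 3 * Real.sqrt 3 * M / a = 4 * s ^ 3 + 3 * s := by
      have h := Real.sinh_three_mul ((1 / 3) * Real.arsinh (3 * Real.sqrt 3 * M / a))
      rw [show (3:ℝ) * ((1 / 3) * Real.arsinh (3 * Real.sqrt 3 * M / a))
          = Real.arsinh (3 * Real.sqrt 3 * M / a) by ring, Real.sinh_arsinh] at h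
      exact h
    have hr := hr₁ a ha
    have hsq3 : Real.sqrt 3 ^ 2 = 3 := Real.sq_sqrt (by norm_num)
    have ha' : a ≠ 0 := ne_of_gt ha
    have h3' : Real.sqrt 3 ≠ 0 := ne_of_gt h3
    have hM' : 3 * Real.sqrt 3 * M = (4 * s ^ 3 + 3 * s) * a := by
      field_simp at hxval; linarith
    constructor
    · rw [hr]; positivity
    · rw [hr]
      rw [← hsdef]
      field_simp
      linear_combination (-1) * hM' + (a*s - Real.sqrt 3*M) * hsq3
  have hpos : ∀ a : ℝ, 0 < a → 0 < r₁ a := fun a ha => (key a ha).1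
  have hpoly : ∀ a : ℝ, 0 < a → r₁ a * a ^ 2 + (r₁ a) ^ 3 = 2 * M * a ^ 2 := by
    intro a ha
    have h := (key a ha).2
    have ha' : a ≠ 0 := ne_of_gt ha
    field_simp at h
    linarith
  have hlt : ∀ a : ℝ, 0 < a → r₁ a < 2 * M := by
    intro a ha
    have h := hpoly a ha
    have h1 : 0 < (r₁ a) ^ 3 := pow_pos (hpos a ha) 3
    nlinarith [sq_nonneg a, ha]
  -- part 3
  have part3 : ∀ a : ℝ, 0 < a →
      ε a = (r₁ a) ^ 2 / (a ^ 2 + (r₁ a) ^ 2) ∧ ε a ∈ Set.Ioo (0 : ℝ) 1 := by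
    intro a ha
    have h := hpoly a ha
    have hra := hpos a ha
    have hden : 0 < a ^ 2 + (r₁ a) ^ 2 := by positivity
    have h2M : (2 * M) ≠ 0 := by positivity
    have heq : ε a = (r₁ a) ^ 2 / (a ^ 2 + (r₁ a) ^ 2) := by
      rw [hε a ha, eq_div_iff (ne_of_gt hden)]
      field_simp
      nlinarith [h]
    refine ⟨heq, ?_⟩
    rw [heq]
    constructor
    · positivity
    · rw [div_lt_one hden]
      nlinarith [sq_nonneg a, ha]
  -- limit of r₁ at +∞
  have tend1 : Filter.Tendsto r₁ Filter.atTop (nhds (2 * M)) := by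
    have hlow : Filter.Tendsto (fun a : ℝ => 2 * M - (2 * M) ^ 3 / a ^ 2)
        Filter.atTop (nhds (2 * M)) := by
      have h0 : Filter.Tendsto (fun a : ℝ => (2 * M) ^ 3 / a ^ 2) Filter.atTop (nhds 0) :=
        Filter.Tendsto.div_atTop tendsto_const_nhds (Filter.tendsto_pow_atTop two_ne_zero)
      simpa using tendsto_const_nhds.sub h0
    refine tendsto_of_tendsto_of_tendsto_of_le_of_le' hlow tendsto_const_nhds ?_ ?_
    · filter_upwards [Filter.eventually_gt_atTop 0] with a ha
      have h := hpoly a ha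
      have hb : (r₁ a) ^ 3 ≤ (2 * M) ^ 3 := by
        exact pow_le_pow_left₀ (hpos a ha).le (hlt a ha).le 3
      have ha2 : (0:ℝ) < a ^ 2 := by positivity
      have hdiv : (r₁ a) ^ 3 / a ^ 2 ≤ (2 * M) ^ 3 / a ^ 2 :=
        div_le_div_of_nonneg_right hb ha2.le
      have h3 := (key a ha).2
      linarith
    · filter_upwards [Filter.eventually_gt_atTop 0] with a ha
      exact le_of_lt (hlt a ha)
  -- cube root helper
  have cube : ∀ x : ℝ, 0 ≤ x → (x ^ 3) ^ ((1:ℝ)/3) = x := by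
    intro x hx
    rw [← Real.rpow_natCast x 3, ← Real.rpow_mul hx]
    norm_num
  -- limit of r₁ at 0⁺
  have t0 : Filter.Tendsto r₁ (nhdsWithin 0 (Set.Ioi 0)) (nhds 0) := by
    have hupp : Filter.Tendsto (fun a : ℝ => (2 * M * a ^ 2) ^ ((1:ℝ)/3))
        (nhdsWithin 0 (Set.Ioi 0)) (nhds 0) := by
      have h1 : Filter.Tendsto (fun a : ℝ => 2 * M * a ^ 2)
          (nhdsWithin 0 (Set.Ioi 0)) (nhds 0) := by
        have hc : Continuous (fun a : ℝ => 2 * M * a ^ 2) := by continuity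
        have := hc.tendsto (0:ℝ)
        simpa using this.mono_left nhdsWithin_le_nhds
      have := h1.rpow_const (p := (1:ℝ)/3) (Or.inr (by norm_num))
      simpa [Real.zero_rpow (by norm_num : (1:ℝ)/3 ≠ 0)] using this
    refine tendsto_of_tendsto_of_tendsto_of_le_of_le' tendsto_const_nhds hupp ?_ ?_
    · filter_upwards [self_mem_nhdsWithin] with a (ha : 0 < a)
      exact le_of_lt (hpos a ha)
    · filter_upwards [self_mem_nhdsWithin] with a (ha : 0 < a)
      have h := hpoly a ha
      have h3 : (r₁ a) ^ 3 ≤ 2 * M * a ^ 2 := by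
        nlinarith [mul_nonneg (hpos a ha).le (sq_nonneg a)]
      calc r₁ a = ((r₁ a) ^ 3) ^ ((1:ℝ)/3) := (cube _ (hpos a ha).le).symm
        _ ≤ (2 * M * a ^ 2) ^ ((1:ℝ)/3) :=
          Real.rpow_le_rpow (pow_nonneg (hpos a ha).le 3) h3 (by norm_num)
  -- limit of ε at 0⁺
  have tendε1 : Filter.Tendsto ε (nhdsWithin 0 (Set.Ioi 0)) (nhds 1) := by
    have h1 : Filter.Tendsto (fun a => 1 - r₁ a / (2 * M))
        (nhdsWithin 0 (Set.Ioi 0)) (nhds 1) := by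
      have := (tendsto_const_nhds (x := (1:ℝ))).sub (t0.div_const (2 * M))
      simpa using this
    exact h1.congr'
      (by filter_upwards [self_mem_nhdsWithin] with a (ha : 0 < a) using (hε a ha).symm)
  -- limit of ε at +∞
  have tendε0 : Filter.Tendsto ε Filter.atTop (nhds 0) := by
    have h2M : (2 * M) ≠ 0 := by positivity
    have h1 : Filter.Tendsto (fun a => 1 - r₁ a / (2 * M)) Filter.atTop (nhds 0) := by
      have := (tendsto_const_nhds (x := (1:ℝ))).sub (tend1.div_const (2 * M))
      simpa [div_self h2M] using this
    exact h1.congr'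
      (by filter_upwards [Filter.eventually_gt_atTop 0] with a ha using (hε a ha).symm)
  -- ratio limit
  have tendratio : Filter.Tendsto (fun a : ℝ => r₁ a / (2 * M * a ^ 2) ^ ((1 : ℝ) / 3))
      (nhdsWithin 0 (Set.Ioi 0)) (nhds 1) := by
    have heq : ∀ᶠ a in nhdsWithin (0:ℝ) (Set.Ioi 0),
        (ε a) ^ ((1:ℝ)/3) = r₁ a / (2 * M * a ^ 2) ^ ((1:ℝ)/3) := by
      filter_upwards [self_mem_nhdsWithin] with a (ha : 0 < a)
      have hεpos : 0 < ε a := (part3 a ha).2.1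
      have h2 : (r₁ a) ^ 3 = 2 * M * a ^ 2 * ε a := by
        rw [hε a ha]
        have hsimp : 2 * M * a ^ 2 * (1 - r₁ a / (2 * M)) = 2 * M * a ^ 2 - a ^ 2 * r₁ a := by
          have h2M : (2 * M) ≠ 0 := by positivity
          field_simp
        rw [hsimp]
        have := hpoly a ha
        linarith
      have hbase : (0:ℝ) < (2 * M * a ^ 2) ^ ((1:ℝ)/3) := by
        apply Real.rpow_pos_of_pos; positivity
      have hr : r₁ a = (2 * M * a ^ 2) ^ ((1:ℝ)/3) * (ε a) ^ ((1:ℝ)/3) := by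
        rw [← Real.mul_rpow (by positivity) hεpos.le, ← h2, cube _ (hpos a ha).le]
      rw [hr, mul_comm, mul_div_assoc, div_self (ne_of_gt hbase), mul_one]
    have h1 : Filter.Tendsto (fun a => (ε a) ^ ((1:ℝ)/3))
        (nhdsWithin 0 (Set.Ioi 0)) (nhds 1) := by
      have := tendε1.rpow_const (p := (1:ℝ)/3) (Or.inl one_ne_zero)
      simpa using this
    exact h1.congr' heq
  exact ⟨tend1, tendratio, part3, tendε0, tendε1⟩
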